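/- Let F be a field, let n, k satisfy 1 ≤ k ≤ n−1 and n − k ≤ k, let G be a generator matrix of an [n,k] MDS code over F and H a corresponding parity-check matrix. Let T₁ and T₂ be disjoint subsets of the n coordinates with |T₁| ≤ k and |T₂| ≤ k. Then there exists a subset S of the coordinates such that (T₁ ⊆ S or T₁ ∩ S = ∅), (T₂ ⊆ S or T₂ ∩ S = ∅), and the rank of G · diag(1_S) · Hᵀ equals n − k. (Thus the (rep, 1_S)-retrieval scheme is ⟨T₁,T₂⟩-secure and has retrieval rate (n−k)/n.) -/

import Mathlib

open Matrix

/-- If the columns of `G` in any `k`-set are independent, a vector supported on a set of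
size ≤ k in the kernel of `G` is zero. -/
lemma mds_support_zero (F : Type*) [Field F] (n k : ℕ) (hkn : k ≤ n)
    (G : Matrix (Fin k) (Fin n) F)
    (hMDS : ∀ s : Finset (Fin n), s.card = k →
      LinearIndependent F (fun j : s => G.transpose j.val))
    (s : Finset (Fin n)) (hs : s.card ≤ k) (z : Fin n → F)
    (hsupp : ∀ j, j ∉ s → z j = 0) (hz : G.mulVec z = 0) : z = 0 := by
  obtain ⟨t, hst, -, ht⟩ := Finset.exists_subsuperset_card_eq (Finset.subset_univ s) hs
    (by simpa using hkn)
  have hli := hMDS t ht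
  rw [Fintype.linearIndependent_iff] at hli
  have hsum : ∑ j : t, z j • (fun i => G.transpose j.val i) = 0 := by
    funext i
    have hext : ∑ j ∈ t, z j * G i j = ∑ j : Fin n, z j * G i j := by
      refine Finset.sum_subset (Finset.subset_univ t) ?_
      intro j _ hj
      rw [hsupp j (fun h => hj (hst h)), zero_mul]
    have h0 : G.mulVec z i = 0 := by rw [hz]; rfl
    simp only [Matrix.mulVec, dotProduct] at h0
    calc (∑ j : t, z j • (fun i => G.transpose j.val i)) i
        = ∑ j : t, z j * G i j := by
          rw [Finset.sum_apply]
          simp [Matrix.transpose_apply]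
      _ = ∑ j ∈ t, z j * G i j := Finset.sum_coe_sort t (fun j => z j * G i j)
      _ = ∑ j : Fin n, z j * G i j := hext
      _ = 0 := by rw [← h0]; exact Finset.sum_congr rfl (fun j _ => mul_comm _ _)
  have hz' := hli (fun j : t => z j) (by exact hsum)
  funext j
  by_cases hj : j ∈ t
  · exact hz' ⟨j, hj⟩
  · exact hsupp j (fun h => hj (hst h))

/-- For an `[n,k]` MDS code with `n − k ≤ k`, generator matrix `G` and
parity-check matrix `H`, and disjoint colluding sets `T₁, T₂` of size at most `k`,
there is a set `S` of coordinates whose indicator vector is constant on `T₁` and on `T₂`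
(so the `(rep, 1_S)`-scheme is `⟨T₁,T₂⟩`-secure) with `rank (G · diag(1_S) · Hᵀ) = n − k`. -/
theorem stmt_9 (F : Type*) [Field F] (n k : ℕ) (hk1 : 1 ≤ k) (hk2 : k ≤ n - 1)
    (hnk : n - k ≤ k)
    (G : Matrix (Fin k) (Fin n) F) (H : Matrix (Fin (n - k)) (Fin n) F)
    (hMDS : ∀ s : Finset (Fin n), s.card = k →
      LinearIndependent F (fun j : s => G.transpose j.val))
    (hH : H.rank = n - k) (hGH : G * H.transpose = 0)
    (T₁ T₂ : Finset (Fin n)) (hdisj : Disjoint T₁ T₂)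
    (h1 : T₁.card ≤ k) (h2 : T₂.card ≤ k) :
    ∃ S : Finset (Fin n), (T₁ ⊆ S ∨ T₁ ∩ S = ∅) ∧ (T₂ ⊆ S ∨ T₂ ∩ S = ∅) ∧
      (G * Matrix.diagonal (fun i => if i ∈ S then (1 : F) else 0) * H.transpose).rank
        = n - k := by
  have hn1 : 1 ≤ n := le_trans hk1 (le_trans hk2 (Nat.sub_le n 1))
  have hkn : k ≤ n := le_trans hk2 (Nat.sub_le n 1)
  -- choose S : T₂ ⊆ S ⊆ T₁ᶜ, of card max (n-k) T₂.card
  have hT2T1c : T₂ ⊆ T₁ᶜ := fun x hx => Finset.mem_compl.2 (fun hx1 =>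
    (Finset.disjoint_left.1 hdisj hx1) hx)
  have hcardT1c : (T₁ᶜ : Finset (Fin n)).card = n - T₁.card := by
    rw [Finset.card_compl, Fintype.card_fin]
  obtain ⟨S, hT2S, hST1c, hScard⟩ := Finset.exists_subsuperset_card_eq hT2T1c
    (le_max_right (n - k) T₂.card)
    (by rw [hcardT1c]
        have hc := Finset.card_le_card hT2T1c
        rw [hcardT1c] at hc
        refine max_le ?_ hc
        omega)
  have hSk : S.card ≤ k := by rw [hScard]; exact max_le hnk h2
  have hSnk : n - k ≤ S.card := by rw [hScard]; exact le_max_left _ _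
  have hScompl : (Sᶜ : Finset (Fin n)).card ≤ k := by
    rw [Finset.card_compl, Fintype.card_fin]; omega
  refine ⟨S, Or.inr ?_, Or.inl hT2S, ?_⟩
  · rw [Finset.eq_empty_iff_forall_notMem]
    intro x hx
    exact Finset.mem_compl.1 (hST1c (Finset.mem_inter.1 hx).2) (Finset.mem_inter.1 hx).1
  -- the rank computation
  set d : Fin n → F := fun i => if i ∈ S then (1 : F) else 0 with hd
  set M := G * Matrix.diagonal d * H.transpose with hM
  -- ker M ⊆ ker Hᵀ
  have hker : LinearMap.ker M.mulVecLin ≤ LinearMap.ker H.transpose.mulVecLin := by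
    intro x hx
    simp only [LinearMap.mem_ker, Matrix.mulVecLin_apply] at hx ⊢
    set y := H.transpose.mulVec x with hy
    have hMx : G.mulVec ((Matrix.diagonal d).mulVec y) = 0 := by
      rw [Matrix.mulVec_mulVec, Matrix.mulVec_mulVec]; exact hx
    have hGy : G.mulVec y = 0 := by
      rw [hy, Matrix.mulVec_mulVec, hGH]; simp
    -- z = diag d * y is supported on S and in ker G ⇒ z = 0 ⇒ y vanishes on S
    have hz0 : (Matrix.diagonal d).mulVec y = 0 := by
      refine mds_support_zero F n k hkn G hMDS S hSk _ ?_ hMx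
      intro j hj
      rw [Matrix.mulVec_diagonal]
      simp [hd, hj]
    have hyS : ∀ j, j ∈ S → y j = 0 := by
      intro j hj
      simpa [Matrix.mulVec_diagonal, d, hj] using congrFun hz0 j
    -- y is supported on Sᶜ and in ker G ⇒ y = 0
    have hy0 : y = 0 := by
      refine mds_support_zero F n k hkn G hMDS Sᶜ hScompl y ?_ hGy
      intro j hj
      exact hyS j (by simpa using hj)
    exact hy0
  -- rank via rank-nullity
  have hfin1 := LinearMap.finrank_range_add_finrank_ker M.mulVecLin
  have hfin2 := LinearMap.finrank_range_add_finrank_ker H.transpose.mulVecLin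
  have hdom : Module.finrank F (Fin (n - k) → F) = n - k := by simp
  have hrHt : H.transpose.rank = n - k := by rw [Matrix.rank_transpose]; exact hH
  have hkerHt : Module.finrank F (LinearMap.ker H.transpose.mulVecLin) = 0 := by
    have : H.transpose.rank = Module.finrank F (LinearMap.range H.transpose.mulVecLin) := rfl
    omega
  have hkerM : Module.finrank F (LinearMap.ker M.mulVecLin) = 0 := by
    have hle := Submodule.finrank_mono hker
    omega
  have : M.rank = Module.finrank F (LinearMap.range M.mulVecLin) := rfl
  omega
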